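/- arXiv:1010.4111 — 5 statements merged into one kernel-verified Lean document; each statement's English description precedes it below -/
import Mathlib

section
/- For ordinals γ < β, one has 3_2(γ) × 3_2(γ) < 3_2(β), where 3_2(β) := 3^(3^β) in ordinal exponentiation and × is ordinal (natural) multiplication. -/
universe u

namespace Ordinal

/-- Natural addition (as in the older Mathlib's `Ordinal.nadd`). -/
noncomputable def nadd (a b : Ordinal.{u}) : Ordinal.{u} :=
  max (⨆ x : Set.Iio a, Order.succ (nadd x.1 b)) (⨆ x : Set.Iio b, Order.succ (nadd a x.1))
termination_by (a, b)
decreasing_by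
  · exact Prod.Lex.left _ _ x.2
  · exact Prod.Lex.right _ x.2

/-- Natural multiplication (as in the older Mathlib's `Ordinal.nmul`). -/
noncomputable def nmul (a b : Ordinal.{u}) : Ordinal.{u} :=
  sInf {c | ∀ a' < a, ∀ b' < b, nadd (nmul a' b) (nmul a b') < nadd c (nmul a' b')}
termination_by (a, b)
decreasing_by
  · exact Prod.Lex.left _ _ (by assumption)
  · exact Prod.Lex.right _ (by assumption)
  · exact Prod.Lex.left _ _ (by assumption)

end Ordinal

namespace NaturalOps

infixl:70 " ⨳ " => Ordinal.nmul

end NaturalOps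

open Ordinal NaturalOps

/-- `3_2(β) := 3^(3^β)` in ordinal exponentiation. -/
noncomputable def threeTwo (β : Ordinal) : Ordinal := (3 : Ordinal) ^ ((3 : Ordinal) ^ β)

infixl:65 " ♯ " => Ordinal.nadd

namespace Ordinal

theorem nadd_le_iff {a b c : Ordinal.{u}} :
    a ♯ b ≤ c ↔ (∀ a' < a, a' ♯ b < c) ∧ ∀ b' < b, a ♯ b' < c := by
  rw [nadd.eq_1 a b, max_le_iff, Ordinal.iSup_le_iff, Ordinal.iSup_le_iff]
  simp only [Order.succ_le_iff, Subtype.forall, Set.mem_Iio]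

theorem nadd_lt_nadd_right {a b : Ordinal.{u}} (h : a < b) (c : Ordinal.{u}) : a ♯ c < b ♯ c :=
  (nadd_le_iff.1 le_rfl).1 a h

theorem nadd_lt_nadd_left {b c : Ordinal.{u}} (h : b < c) (a : Ordinal.{u}) : a ♯ b < a ♯ c :=
  (nadd_le_iff.1 le_rfl).2 b h

theorem nadd_le_nadd_right {a b : Ordinal.{u}} (h : a ≤ b) (c : Ordinal.{u}) : a ♯ c ≤ b ♯ c := by
  rcases h.lt_or_eq with h | rfl
  · exact (nadd_lt_nadd_right h c).le
  · exact le_rfl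

theorem nadd_le_nadd_left {b c : Ordinal.{u}} (h : b ≤ c) (a : Ordinal.{u}) : a ♯ b ≤ a ♯ c := by
  rcases h.lt_or_eq with h | rfl
  · exact (nadd_lt_nadd_left h a).le
  · exact le_rfl

theorem nadd_lt_nadd_iff_right {a b c : Ordinal.{u}} : a ♯ c < b ♯ c ↔ a < b :=
  ⟨fun h => lt_of_not_ge fun h' => lt_irrefl _ (h.trans_le (nadd_le_nadd_right h' c)),
    fun h => nadd_lt_nadd_right h c⟩

theorem nadd_lt_nadd_iff_left {a b c : Ordinal.{u}} : a ♯ b < a ♯ c ↔ b < c :=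
  ⟨fun h => lt_of_not_ge fun h' => lt_irrefl _ (h.trans_le (nadd_le_nadd_left h' a)),
    fun h => nadd_lt_nadd_left h a⟩

theorem nadd_lt_nadd_of_lt_of_le {a b c d : Ordinal.{u}} (h1 : a < b) (h2 : c ≤ d) :
    a ♯ c < b ♯ d :=
  (nadd_lt_nadd_right h1 c).trans_le (nadd_le_nadd_left h2 b)

theorem nadd_lt_nadd_of_le_of_lt {a b c d : Ordinal.{u}} (h1 : a ≤ b) (h2 : c < d) :
    a ♯ c < b ♯ d :=
  (nadd_le_nadd_right h1 c).trans_lt (nadd_lt_nadd_left h2 b)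

theorem lt_nadd_iff {a b c : Ordinal.{u}} :
    c < a ♯ b ↔ (∃ a' < a, c ≤ a' ♯ b) ∨ ∃ b' < b, c ≤ a ♯ b' := by
  constructor
  · intro h
    by_contra h'
    push_neg at h'
    exact lt_irrefl _ (h.trans_le (nadd_le_iff.2 h'))
  · rintro (⟨a', ha, h⟩ | ⟨b', hb, h⟩)
    · exact h.trans_lt (nadd_lt_nadd_right ha b)
    · exact h.trans_lt (nadd_lt_nadd_left hb a)

theorem nadd_comm (a b : Ordinal.{u}) : a ♯ b = b ♯ a := by
  induction a using Ordinal.induction generalizing b with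
  | _ a IHa =>
  induction b using Ordinal.induction with
  | _ b IHb =>
  apply le_antisymm
  · rw [nadd_le_iff]
    refine ⟨fun a' h => ?_, fun b' h => ?_⟩
    · rw [IHa a' h b]; exact nadd_lt_nadd_left h b
    · rw [IHb b' h]; exact nadd_lt_nadd_right h a
  · rw [nadd_le_iff]
    refine ⟨fun b' h => ?_, fun a' h => ?_⟩
    · rw [← IHb b' h]; exact nadd_lt_nadd_left h a
    · rw [← IHa a' h b]; exact nadd_lt_nadd_right h b

@[simp]
theorem nadd_zero (a : Ordinal.{u}) : a ♯ 0 = a := by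
  induction a using Ordinal.induction with
  | _ a IH =>
  apply le_antisymm
  · rw [nadd_le_iff]
    refine ⟨fun a' h => ?_, fun b' h => by simp at h⟩
    rw [IH a' h]; exact h
  · by_contra hlt
    push_neg at hlt
    have := nadd_lt_nadd_right hlt 0
    rw [IH _ hlt] at this
    exact lt_irrefl _ this

@[simp]
theorem zero_nadd (a : Ordinal.{u}) : 0 ♯ a = a := by
  rw [nadd_comm, nadd_zero]

theorem le_self_nadd {a b : Ordinal.{u}} : a ≤ a ♯ b :=
  calc a = a ♯ 0 := (nadd_zero a).symm
    _ ≤ a ♯ b := nadd_le_nadd_left (zero_le : (0 : Ordinal.{u}) ≤ b) a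

theorem nadd_assoc (a b c : Ordinal.{u}) : a ♯ b ♯ c = a ♯ (b ♯ c) := by
  induction a using Ordinal.induction generalizing b c with
  | _ a IHa =>
  induction b using Ordinal.induction generalizing c with
  | _ b IHb =>
  induction c using Ordinal.induction with
  | _ c IHc =>
  apply le_antisymm
  · rw [nadd_le_iff]
    refine ⟨fun x hx => ?_, fun c' hc => ?_⟩
    · rcases lt_nadd_iff.1 hx with ⟨a', ha, hx⟩ | ⟨b', hb, hx⟩
      · calc x ♯ c ≤ a' ♯ b ♯ c := nadd_le_nadd_right hx c
          _ = a' ♯ (b ♯ c) := IHa a' ha b c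
          _ < a ♯ (b ♯ c) := nadd_lt_nadd_right ha _
      · calc x ♯ c ≤ a ♯ b' ♯ c := nadd_le_nadd_right hx c
          _ = a ♯ (b' ♯ c) := IHb b' hb c
          _ < a ♯ (b ♯ c) := nadd_lt_nadd_left (nadd_lt_nadd_right hb c) a
    · rw [IHc c' hc]
      exact nadd_lt_nadd_left (nadd_lt_nadd_left hc b) a
  · rw [nadd_le_iff]
    refine ⟨fun a' ha => ?_, fun x hx => ?_⟩
    · rw [← IHa a' ha b c]
      exact nadd_lt_nadd_right (nadd_lt_nadd_right ha b) c
    · rcases lt_nadd_iff.1 hx with ⟨b', hb, hx⟩ | ⟨c', hc, hx⟩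
      · calc a ♯ x ≤ a ♯ (b' ♯ c) := nadd_le_nadd_left hx a
          _ = a ♯ b' ♯ c := (IHb b' hb c).symm
          _ < a ♯ b ♯ c := nadd_lt_nadd_right (nadd_lt_nadd_left hb a) c
      · calc a ♯ x ≤ a ♯ (b ♯ c') := nadd_le_nadd_left hx a
          _ = a ♯ b ♯ c' := (IHc c' hc).symm
          _ < a ♯ b ♯ c := nadd_lt_nadd_left hc _

instance : Std.Commutative (α := Ordinal.{u}) nadd := ⟨nadd_comm⟩

instance : Std.Associative (α := Ordinal.{u}) nadd := ⟨nadd_assoc⟩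

theorem nadd_succ (a b : Ordinal.{u}) : a ♯ Order.succ b = Order.succ (a ♯ b) := by
  induction a using Ordinal.induction with
  | _ a IH =>
  apply le_antisymm
  · rw [nadd_le_iff]
    refine ⟨fun a' ha => ?_, fun b' hb => ?_⟩
    · rw [IH a' ha]; exact Order.succ_lt_succ (nadd_lt_nadd_right ha b)
    · exact Order.lt_succ_of_le (nadd_le_nadd_left (Order.le_of_lt_succ hb) a)
  · exact Order.succ_le_of_lt (nadd_lt_nadd_left (Order.lt_succ b) a)

theorem succ_nadd (a b : Ordinal.{u}) : Order.succ a ♯ b = Order.succ (a ♯ b) := by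
  rw [nadd_comm, nadd_succ, nadd_comm]

theorem nadd_one (a : Ordinal.{u}) : a ♯ 1 = Order.succ a := by
  have h1 : (1 : Ordinal.{u}) = Order.succ 0 := by rw [← Ordinal.add_one_eq_succ, zero_add]
  rw [h1, nadd_succ, nadd_zero]

theorem nadd_nat (a : Ordinal.{u}) (n : ℕ) : a ♯ n = a + n := by
  induction n with
  | zero => simp only [Nat.cast_zero, nadd_zero, add_zero]
  | succ n ih =>
    rw [Nat.cast_succ, Ordinal.add_one_eq_succ, nadd_succ, ih, Ordinal.add_succ]

theorem add_le_nadd (a b : Ordinal.{u}) : a + b ≤ a ♯ b := by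
  induction b using Ordinal.induction with
  | _ b IH =>
  rcases zero_or_succ_or_isSuccLimit b with rfl | ⟨c, rfl⟩ | hb
  · rw [add_zero, nadd_zero]
  · rw [Ordinal.add_succ, nadd_succ]
    exact Order.succ_le_succ (IH c (Order.lt_succ c))
  · rw [add_le_iff_of_isSuccLimit hb]
    intro d hd
    exact (IH d hd).trans (nadd_le_nadd_left hd.le a)

theorem nmul_nonempty (a b : Ordinal.{u}) :
    {c : Ordinal.{u} | ∀ a' < a, ∀ b' < b, a' ⨳ b ♯ a ⨳ b' < c ♯ a' ⨳ b'}.Nonempty := by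
  refine ⟨⨆ x : Set.Iio a, ⨆ y : Set.Iio b, Order.succ (x.1 ⨳ b ♯ a ⨳ y.1),
    fun a' ha b' hb => ?_⟩
  have h1 := Ordinal.le_iSup (fun y : Set.Iio b => Order.succ (a' ⨳ b ♯ a ⨳ y.1)) ⟨b', hb⟩
  have h2 := Ordinal.le_iSup
    (fun x : Set.Iio a => ⨆ y : Set.Iio b, Order.succ (x.1 ⨳ b ♯ a ⨳ y.1)) ⟨a', ha⟩
  exact (Order.lt_succ _).trans_le ((h1.trans h2).trans le_self_nadd)

theorem nmul_nadd_lt {a a' b b' : Ordinal.{u}} (ha : a' < a) (hb : b' < b) :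
    a' ⨳ b ♯ a ⨳ b' < a ⨳ b ♯ a' ⨳ b' := by
  rw [nmul.eq_1 a b]
  exact csInf_mem (nmul_nonempty a b) a' ha b' hb

theorem nmul_le_iff {a b c : Ordinal.{u}} :
    a ⨳ b ≤ c ↔ ∀ a' < a, ∀ b' < b, a' ⨳ b ♯ a ⨳ b' < c ♯ a' ⨳ b' := by
  constructor
  · intro h a' ha b' hb
    exact (nmul_nadd_lt ha hb).trans_le (nadd_le_nadd_right h _)
  · intro h
    rw [nmul.eq_1 a b]
    exact csInf_le' h

theorem lt_nmul_iff {a b c : Ordinal.{u}} :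
    c < a ⨳ b ↔ ∃ a' < a, ∃ b' < b, c ♯ a' ⨳ b' ≤ a' ⨳ b ♯ a ⨳ b' := by
  constructor
  · intro h
    by_contra h'
    push_neg at h'
    exact lt_irrefl _ (h.trans_le (nmul_le_iff.2 h'))
  · rintro ⟨a', ha, b', hb, h⟩
    exact nadd_lt_nadd_iff_right.1 (h.trans_lt (nmul_nadd_lt ha hb))

theorem nmul_comm (a b : Ordinal.{u}) : a ⨳ b = b ⨳ a := by
  induction a using Ordinal.induction generalizing b with
  | _ a IHa =>
  induction b using Ordinal.induction with
  | _ b IHb =>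
  apply le_antisymm
  · rw [nmul_le_iff]
    intro a' ha b' hb
    rw [IHa a' ha b, IHb b' hb, IHa a' ha b', nadd_comm (b ⨳ a')]
    exact nmul_nadd_lt hb ha
  · rw [nmul_le_iff]
    intro b' hb a' ha
    rw [← IHb b' hb, ← IHa a' ha b, ← IHa a' ha b', nadd_comm (a ⨳ b')]
    exact nmul_nadd_lt ha hb

@[simp]
theorem nmul_zero (a : Ordinal.{u}) : a ⨳ 0 = 0 :=
  le_antisymm (nmul_le_iff.2 fun _ _ b' hb => absurd hb (by simp)) zero_le

@[simp]
theorem zero_nmul (a : Ordinal.{u}) : 0 ⨳ a = 0 := by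
  rw [nmul_comm, nmul_zero]

theorem nmul_lt_nmul_of_pos_right {a a' b : Ordinal.{u}} (h : a' < a) (hb : 0 < b) :
    a' ⨳ b < a ⨳ b := by
  have := nmul_nadd_lt h hb
  simp only [nmul_zero, nadd_zero] at this
  exact this

theorem nmul_le_nmul_right {a b : Ordinal.{u}} (h : a ≤ b) (c : Ordinal.{u}) : a ⨳ c ≤ b ⨳ c := by
  rcases h.lt_or_eq with h | rfl
  · rcases eq_zero_or_pos c with rfl | hc
    · rw [nmul_zero, nmul_zero]
    · exact (nmul_lt_nmul_of_pos_right h hc).le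
  · exact le_rfl

@[simp]
theorem nmul_one (a : Ordinal.{u}) : a ⨳ 1 = a := by
  induction a using Ordinal.induction with
  | _ a IH =>
  apply le_antisymm
  · rw [nmul_le_iff]
    intro a' ha b' hb
    rw [Ordinal.lt_one_iff_zero] at hb
    subst hb
    simp only [nmul_zero, nadd_zero]
    rw [IH a' ha]
    exact ha
  · by_contra hlt
    push_neg at hlt
    have := nmul_lt_nmul_of_pos_right hlt zero_lt_one
    rw [IH _ hlt] at this
    exact lt_irrefl _ this

theorem nmul_nadd_le {a a' b b' : Ordinal.{u}} (ha : a' ≤ a) (hb : b' ≤ b) :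
    a' ⨳ b ♯ a ⨳ b' ≤ a ⨳ b ♯ a' ⨳ b' := by
  rcases ha.lt_or_eq with ha | rfl
  · rcases hb.lt_or_eq with hb | rfl
    · exact (nmul_nadd_lt ha hb).le
    · rw [nadd_comm]
  · exact le_rfl

theorem nmul_nadd (a b c : Ordinal.{u}) : a ⨳ (b ♯ c) = a ⨳ b ♯ a ⨳ c := by
  induction a using Ordinal.induction generalizing b c with
  | _ a IHa =>
  induction b using Ordinal.induction generalizing c with
  | _ b IHb =>
  induction c using Ordinal.induction with
  | _ c IHc =>
  apply le_antisymm
  · rw [nmul_le_iff]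
    intro a' ha d hd
    rw [IHa a' ha b c]
    rcases lt_nadd_iff.1 hd with ⟨b', hb, hd⟩ | ⟨c', hc, hd⟩
    · have := nadd_lt_nadd_of_lt_of_le (nmul_nadd_lt ha hb) (nmul_nadd_le ha.le hd)
      rw [IHa a' ha b' c, IHb b' hb c] at this
      refine (nadd_lt_nadd_iff_left (a := a ⨳ b' ♯ a' ⨳ b')).1
        (lt_of_eq_of_lt ?_ (lt_of_lt_of_eq this ?_)) <;> ac_rfl
    · have := nadd_lt_nadd_of_lt_of_le (nmul_nadd_lt ha hc) (nmul_nadd_le ha.le hd)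
      rw [IHa a' ha b c', IHc c' hc] at this
      refine (nadd_lt_nadd_iff_left (a := a ⨳ c' ♯ a' ⨳ c')).1
        (lt_of_eq_of_lt ?_ (lt_of_lt_of_eq this ?_)) <;> ac_rfl
  · rw [nadd_le_iff]
    refine ⟨fun d hd => ?_, fun d hd => ?_⟩
    · obtain ⟨a', ha, b', hb, hd⟩ := lt_nmul_iff.1 hd
      have := nadd_lt_nadd_of_le_of_lt hd (nmul_nadd_lt ha (nadd_lt_nadd_right hb c))
      rw [IHa a' ha b c, IHb b' hb c, IHa a' ha b' c] at this
      refine (nadd_lt_nadd_iff_left (a := a' ⨳ b ♯ a' ⨳ c ♯ a ⨳ b' ♯ a' ⨳ b')).1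
        (lt_of_eq_of_lt ?_ (lt_of_lt_of_eq this ?_)) <;> ac_rfl
    · obtain ⟨a', ha, c', hc, hd⟩ := lt_nmul_iff.1 hd
      have := nadd_lt_nadd_of_le_of_lt hd (nmul_nadd_lt ha (nadd_lt_nadd_left hc b))
      rw [IHa a' ha b c, IHc c' hc, IHa a' ha b c'] at this
      refine (nadd_lt_nadd_iff_left (a := a' ⨳ b ♯ a' ⨳ c ♯ a ⨳ c' ♯ a' ⨳ c')).1
        (lt_of_eq_of_lt ?_ (lt_of_lt_of_eq this ?_)) <;> ac_rfl

theorem nadd_nmul (a b c : Ordinal.{u}) : (a ♯ b) ⨳ c = a ⨳ c ♯ b ⨳ c := by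
  rw [nmul_comm (a ♯ b) c, nmul_nadd, nmul_comm c a, nmul_comm c b]

theorem nmul_add_one (a b : Ordinal.{u}) : a ⨳ (b + 1) = a ⨳ b ♯ a := by
  rw [Ordinal.add_one_eq_succ, ← nadd_one, nmul_nadd, nmul_one]

theorem mul_le_nmul (a b : Ordinal.{u}) : a * b ≤ a ⨳ b := by
  induction b using Ordinal.induction with
  | _ b IH =>
  rcases zero_or_succ_or_isSuccLimit b with rfl | ⟨c, rfl⟩ | hb
  · rw [mul_zero, nmul_zero]
  · rw [← Ordinal.add_one_eq_succ, mul_add_one, nmul_add_one]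
    exact (add_le_nadd _ a).trans (nadd_le_nadd_right (IH c (Order.lt_succ c)) a)
  · rw [mul_le_iff_of_isSuccLimit hb]
    intro d hd
    exact (IH d hd).trans
      (by rw [nmul_comm a d, nmul_comm a b]; exact nmul_le_nmul_right hd.le a)

theorem nmul_natCast_right_comm (x y : Ordinal.{u}) (m : ℕ) :
    x ⨳ (m : Ordinal) ⨳ y = x ⨳ y ⨳ (m : Ordinal) := by
  induction m with
  | zero => simp only [Nat.cast_zero, nmul_zero, zero_nmul]
  | succ m ih => rw [Nat.cast_succ, nmul_add_one, nmul_add_one, nadd_nmul, ih]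

end Ordinal

/-- Key structural lemma: `ω^e` is closed under natural addition, together with a
merging bound for natural sums of the form `ω^e*m + a`. -/
private lemma omega0_opow_key : ∀ e : Ordinal,
    (∀ x < (ω : Ordinal) ^ e, ∀ y < (ω : Ordinal) ^ e, x ♯ y < (ω : Ordinal) ^ e) ∧
    (∀ (m n : ℕ) (a b : Ordinal), a < (ω : Ordinal) ^ e → b < (ω : Ordinal) ^ e →
      ((ω : Ordinal) ^ e * m + a) ♯ ((ω : Ordinal) ^ e * n + b) ≤
        (ω : Ordinal) ^ e * (m + n : ℕ) + (a ♯ b)) := by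
  intro e
  induction e using Ordinal.induction with
  | _ e IH =>
  have h1 : ∀ x < (ω : Ordinal) ^ e, ∀ y < (ω : Ordinal) ^ e, x ♯ y < (ω : Ordinal) ^ e := by
    rcases Ordinal.zero_or_succ_or_isSuccLimit e with he | ⟨d, he⟩ | he
    · subst he
      intro x hx y hy
      rw [opow_zero, Ordinal.lt_one_iff_zero] at *
      subst hx; subst hy; simpa using Ordinal.zero_lt_one
    · subst he
      intro x hx y hy
      rw [opow_succ] at hx hy ⊢
      obtain ⟨mo, hmo, hxm⟩ := (lt_mul_iff_of_isSuccLimit isSuccLimit_omega0).1 hx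
      obtain ⟨no, hno, hyn⟩ := (lt_mul_iff_of_isSuccLimit isSuccLimit_omega0).1 hy
      obtain ⟨m, rfl⟩ := Ordinal.lt_omega0.1 hmo
      obtain ⟨n, rfl⟩ := Ordinal.lt_omega0.1 hno
      have hw : (ω : Ordinal) ^ d ≠ 0 := opow_ne_zero d omega0_ne_zero
      have hxq : x / (ω : Ordinal) ^ d < (m : Ordinal) := (Ordinal.div_lt hw).2 hxm
      have hyq : y / (ω : Ordinal) ^ d < (n : Ordinal) := (Ordinal.div_lt hw).2 hyn
      obtain ⟨m', hm'⟩ := Ordinal.lt_omega0.1 (hxq.trans (natCast_lt_omega0 m))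
      obtain ⟨n', hn'⟩ := Ordinal.lt_omega0.1 (hyq.trans (natCast_lt_omega0 n))
      have hxd := Ordinal.div_add_mod x ((ω : Ordinal) ^ d)
      have hyd := Ordinal.div_add_mod y ((ω : Ordinal) ^ d)
      have hxr : x % (ω : Ordinal) ^ d < (ω : Ordinal) ^ d := Ordinal.mod_lt x hw
      have hyr : y % (ω : Ordinal) ^ d < (ω : Ordinal) ^ d := Ordinal.mod_lt y hw
      have hkey := (IH d (Order.lt_succ d)).2 m' n' _ _ hxr hyr
      have hnadd : (x % (ω : Ordinal) ^ d) ♯ (y % (ω : Ordinal) ^ d) < (ω : Ordinal) ^ d :=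
        (IH d (Order.lt_succ d)).1 _ hxr _ hyr
      calc x ♯ y = ((ω : Ordinal) ^ d * m' + x % (ω : Ordinal) ^ d) ♯
            ((ω : Ordinal) ^ d * n' + y % (ω : Ordinal) ^ d) := by rw [← hm', ← hn', hxd, hyd]
        _ ≤ (ω : Ordinal) ^ d * (m' + n' : ℕ) +
            ((x % (ω : Ordinal) ^ d) ♯ (y % (ω : Ordinal) ^ d)) := hkey
        _ < (ω : Ordinal) ^ d * (m' + n' : ℕ) + (ω : Ordinal) ^ d := by
            exact add_lt_add_right hnadd _
        _ = (ω : Ordinal) ^ d * ((m' + n' : ℕ) + 1) := by rw [mul_add, mul_one]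
        _ ≤ (ω : Ordinal) ^ d * ω := by
            exact mul_le_mul_right (le_of_lt (by exact_mod_cast natCast_lt_omega0 (m' + n' + 1))) _
    · intro x hx y hy
      obtain ⟨dx, hdx, hx'⟩ := (lt_opow_of_isSuccLimit omega0_ne_zero he).1 hx
      obtain ⟨dy, hdy, hy'⟩ := (lt_opow_of_isSuccLimit omega0_ne_zero he).1 hy
      have hd : max dx dy < e := max_lt hdx hdy
      have h1 : x < (ω : Ordinal) ^ max dx dy :=
        hx'.trans_le (opow_le_opow_right omega0_pos (le_max_left _ _))
      have h2 : y < (ω : Ordinal) ^ max dx dy :=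
        hy'.trans_le (opow_le_opow_right omega0_pos (le_max_right _ _))
      exact ((IH _ hd).1 _ h1 _ h2).trans_le (opow_le_opow_right omega0_pos hd.le)
  refine ⟨h1, ?_⟩
  have hw : (ω : Ordinal) ^ e ≠ 0 := opow_ne_zero e omega0_ne_zero
  intro m
  induction m using Nat.strong_induction_on with
  | _ m IHm =>
  intro n
  induction n using Nat.strong_induction_on with
  | _ n IHn =>
  intro a
  induction a using Ordinal.induction with
  | _ a IHa =>
  intro b
  induction b using Ordinal.induction with
  | _ b IHb =>
  intro ha hb
  rw [nadd_le_iff]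
  constructor
  · intro x hx
    rcases lt_or_ge x ((ω : Ordinal) ^ e * m) with hc | hc
    · have hq : x / (ω : Ordinal) ^ e < (m : Ordinal) := (Ordinal.div_lt hw).2 hc
      obtain ⟨k, hk⟩ := Ordinal.lt_omega0.1 (hq.trans (natCast_lt_omega0 m))
      have hkm : k < m := by exact_mod_cast hk ▸ hq
      have hxd := Ordinal.div_add_mod x ((ω : Ordinal) ^ e)
      have hxr : x % (ω : Ordinal) ^ e < (ω : Ordinal) ^ e := Ordinal.mod_lt x hw
      calc x ♯ ((ω : Ordinal) ^ e * n + b)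
          = ((ω : Ordinal) ^ e * k + x % (ω : Ordinal) ^ e) ♯ ((ω : Ordinal) ^ e * n + b) := by
            rw [← hk, hxd]
        _ ≤ (ω : Ordinal) ^ e * (k + n : ℕ) + ((x % (ω : Ordinal) ^ e) ♯ b) :=
            IHm k hkm n _ _ hxr hb
        _ < (ω : Ordinal) ^ e * (k + n : ℕ) + (ω : Ordinal) ^ e :=
            add_lt_add_right (h1 _ hxr _ hb) _
        _ = (ω : Ordinal) ^ e * ((k + n : ℕ) + 1) := by rw [mul_add, mul_one]
        _ ≤ (ω : Ordinal) ^ e * (m + n : ℕ) := by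
            apply mul_le_mul_right
            have : k + n + 1 ≤ m + n := by omega
            exact_mod_cast this
        _ ≤ (ω : Ordinal) ^ e * (m + n : ℕ) + (a ♯ b) := le_add_right le_rfl
    · have hxe : (ω : Ordinal) ^ e * m + (x - (ω : Ordinal) ^ e * m) = x :=
        Ordinal.add_sub_cancel_of_le hc
      have ha' : x - (ω : Ordinal) ^ e * m < a := by
        have := hx
        rw [← hxe] at this
        exact (add_lt_add_iff_left _).1 this
      calc x ♯ ((ω : Ordinal) ^ e * n + b)
          = ((ω : Ordinal) ^ e * m + (x - (ω : Ordinal) ^ e * m)) ♯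
              ((ω : Ordinal) ^ e * n + b) := by rw [hxe]
        _ ≤ (ω : Ordinal) ^ e * (m + n : ℕ) + ((x - (ω : Ordinal) ^ e * m) ♯ b) :=
            IHa _ ha' _ (ha'.trans ha) hb
        _ < (ω : Ordinal) ^ e * (m + n : ℕ) + (a ♯ b) :=
            add_lt_add_right (nadd_lt_nadd_right ha' b) _
  · intro y hy
    rcases lt_or_ge y ((ω : Ordinal) ^ e * n) with hc | hc
    · have hq : y / (ω : Ordinal) ^ e < (n : Ordinal) := (Ordinal.div_lt hw).2 hc
      obtain ⟨k, hk⟩ := Ordinal.lt_omega0.1 (hq.trans (natCast_lt_omega0 n))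
      have hkn : k < n := by exact_mod_cast hk ▸ hq
      have hyd := Ordinal.div_add_mod y ((ω : Ordinal) ^ e)
      have hyr : y % (ω : Ordinal) ^ e < (ω : Ordinal) ^ e := Ordinal.mod_lt y hw
      calc ((ω : Ordinal) ^ e * m + a) ♯ y
          = ((ω : Ordinal) ^ e * m + a) ♯ ((ω : Ordinal) ^ e * k + y % (ω : Ordinal) ^ e) := by
            rw [← hk, hyd]
        _ ≤ (ω : Ordinal) ^ e * (m + k : ℕ) + (a ♯ (y % (ω : Ordinal) ^ e)) :=
            IHn k hkn _ _ ha hyr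
        _ < (ω : Ordinal) ^ e * (m + k : ℕ) + (ω : Ordinal) ^ e :=
            add_lt_add_right (h1 _ ha _ hyr) _
        _ = (ω : Ordinal) ^ e * ((m + k : ℕ) + 1) := by rw [mul_add, mul_one]
        _ ≤ (ω : Ordinal) ^ e * (m + n : ℕ) := by
            apply mul_le_mul_right
            have : m + k + 1 ≤ m + n := by omega
            exact_mod_cast this
        _ ≤ (ω : Ordinal) ^ e * (m + n : ℕ) + (a ♯ b) := le_add_right le_rfl
    · have hye : (ω : Ordinal) ^ e * n + (y - (ω : Ordinal) ^ e * n) = y :=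
        Ordinal.add_sub_cancel_of_le hc
      have hb' : y - (ω : Ordinal) ^ e * n < b := by
        have := hy
        rw [← hye] at this
        exact (add_lt_add_iff_left _).1 this
      calc ((ω : Ordinal) ^ e * m + a) ♯ y
          = ((ω : Ordinal) ^ e * m + a) ♯
              ((ω : Ordinal) ^ e * n + (y - (ω : Ordinal) ^ e * n)) := by rw [hye]
        _ ≤ (ω : Ordinal) ^ e * (m + n : ℕ) + (a ♯ (y - (ω : Ordinal) ^ e * n)) :=
            IHb _ hb' ha (hb'.trans hb)
        _ < (ω : Ordinal) ^ e * (m + n : ℕ) + (a ♯ b) :=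
            add_lt_add_right (nadd_lt_nadd_left hb' a) _

private lemma nadd_lt_omega0_opow {e x y : Ordinal} (hx : x < (ω : Ordinal) ^ e)
    (hy : y < (ω : Ordinal) ^ e) : x ♯ y < (ω : Ordinal) ^ e :=
  (omega0_opow_key e).1 x hx y hy

private lemma opow_nmul_nat_le (c : Ordinal) (m : ℕ) :
    (ω : Ordinal) ^ c ⨳ (m : Ordinal) ≤ (ω : Ordinal) ^ c * m := by
  induction m with
  | zero => simp [nmul_zero]
  | succ m ih =>
      have h0 : (0 : Ordinal) < (ω : Ordinal) ^ c := opow_pos c omega0_pos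
      have hkey := (omega0_opow_key c).2 m 1 0 0 h0 h0
      simp only [add_zero, mul_one, Nat.cast_one, nadd_zero] at hkey
      calc (ω : Ordinal) ^ c ⨳ ((m + 1 : ℕ) : Ordinal)
          = (ω : Ordinal) ^ c ⨳ ((m : Ordinal) + 1) := by push_cast; ring_nf
        _ = (ω : Ordinal) ^ c ⨳ (m : Ordinal) ♯ (ω : Ordinal) ^ c := nmul_add_one _ _
        _ ≤ (ω : Ordinal) ^ c * m ♯ (ω : Ordinal) ^ c := nadd_le_nadd_right ih _
        _ ≤ (ω : Ordinal) ^ c * ((m + 1 : ℕ) : Ordinal) := hkey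

private lemma nmul_opow_lt : ∀ c a b : Ordinal, a ♯ b ≤ c →
    ∀ x < (ω : Ordinal) ^ a, x ⨳ (ω : Ordinal) ^ b < (ω : Ordinal) ^ (a ♯ b) := by
  intro c
  induction c using Ordinal.induction with
  | _ c IH =>
  intro a b hab x hx
  rcases Ordinal.zero_or_succ_or_isSuccLimit a with ha | ⟨d, ha⟩ | ha
  · subst ha
    rw [opow_zero, Ordinal.lt_one_iff_zero] at hx
    subst hx
    rw [zero_nmul]
    exact opow_pos _ omega0_pos
  · subst ha
    rw [opow_succ] at hx
    obtain ⟨mo, hmo, hxm⟩ := (lt_mul_iff_of_isSuccLimit isSuccLimit_omega0).1 hx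
    obtain ⟨m, rfl⟩ := Ordinal.lt_omega0.1 hmo
    have hdb : d ♯ b < Order.succ d ♯ b := nadd_lt_nadd_right (Order.lt_succ d) b
    have hdbc : d ♯ b < c := hdb.trans_le hab
    -- ω^d ⨳ ω^b ≤ ω^(d♯b)
    have hP : (ω : Ordinal) ^ d ⨳ (ω : Ordinal) ^ b ≤ (ω : Ordinal) ^ (d ♯ b) := by
      rw [nmul_le_iff]
      intro x' hx' y' hy'
      refine lt_of_lt_of_le ?_ le_self_nadd
      have hA : x' ⨳ (ω : Ordinal) ^ b < (ω : Ordinal) ^ (d ♯ b) :=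
        IH (d ♯ b) hdbc d b le_rfl x' hx'
      have hB : (ω : Ordinal) ^ d ⨳ y' < (ω : Ordinal) ^ (d ♯ b) := by
        rw [nmul_comm]
        have := IH (d ♯ b) hdbc b d (by rw [nadd_comm]) y' hy'
        rwa [nadd_comm b d] at this
      exact nadd_lt_omega0_opow hA hB
    calc x ⨳ (ω : Ordinal) ^ b
        ≤ ((ω : Ordinal) ^ d * m) ⨳ (ω : Ordinal) ^ b := nmul_le_nmul_right hxm.le _
      _ ≤ ((ω : Ordinal) ^ d ⨳ (m : Ordinal)) ⨳ (ω : Ordinal) ^ b :=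
          nmul_le_nmul_right (mul_le_nmul _ _) _
      _ = ((ω : Ordinal) ^ d ⨳ (ω : Ordinal) ^ b) ⨳ (m : Ordinal) := by
          rw [nmul_natCast_right_comm]
      _ ≤ (ω : Ordinal) ^ (d ♯ b) ⨳ (m : Ordinal) := nmul_le_nmul_right hP _
      _ ≤ (ω : Ordinal) ^ (d ♯ b) * m := opow_nmul_nat_le _ m
      _ < (ω : Ordinal) ^ (d ♯ b) * ω :=
          mul_lt_mul_of_pos_left (natCast_lt_omega0 m) (opow_pos _ omega0_pos)
      _ = (ω : Ordinal) ^ (Order.succ d ♯ b) := by rw [succ_nadd, opow_succ]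
  · obtain ⟨d, hd, hx'⟩ := (lt_opow_of_isSuccLimit omega0_ne_zero ha).1 hx
    have hdb : d ♯ b < a ♯ b := nadd_lt_nadd_right hd b
    have := IH (d ♯ b) (hdb.trans_le hab) d b le_rfl x hx'
    exact this.trans_le (opow_le_opow_right omega0_pos hdb.le)

private lemma opow_nmul_opow_le (a b : Ordinal) :
    (ω : Ordinal) ^ a ⨳ (ω : Ordinal) ^ b ≤ (ω : Ordinal) ^ (a ♯ b) := by
  rw [nmul_le_iff]
  intro x' hx' y' hy'
  refine lt_of_lt_of_le ?_ le_self_nadd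
  have hA : x' ⨳ (ω : Ordinal) ^ b < (ω : Ordinal) ^ (a ♯ b) :=
    nmul_opow_lt (a ♯ b) a b le_rfl x' hx'
  have hB : (ω : Ordinal) ^ a ⨳ y' < (ω : Ordinal) ^ (a ♯ b) := by
    rw [nmul_comm]
    have := nmul_opow_lt (b ♯ a) b a le_rfl y' hy'
    rwa [nadd_comm b a] at this
  exact nadd_lt_omega0_opow hA hB

private lemma natCast_nmul (p q : ℕ) : ((p : Ordinal) ⨳ (q : Ordinal)) = ((p * q : ℕ) : Ordinal) := by
  induction q with
  | zero => simp [nmul_zero]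
  | succ q ih =>
      have : ((q + 1 : ℕ) : Ordinal) = (q : Ordinal) + 1 := by push_cast; ring
      rw [this, nmul_add_one, ih, nadd_nat]
      push_cast
      rw [mul_add, mul_one]

/-- Representation of `threeTwo` at infinite arguments as an `ω`-power. -/
private lemma threeTwo_eq_omega0_opow {γ : Ordinal} (h : ω ≤ γ) :
    ∃ (s : Ordinal) (n : ℕ), γ = ω * (1 + s) + n ∧
      threeTwo γ = (ω : Ordinal) ^ ((ω : Ordinal) ^ s * ((3 ^ n : ℕ) : Ordinal)) := by
  obtain ⟨n, hn⟩ := Ordinal.lt_omega0.1 (Ordinal.mod_lt γ omega0_ne_zero)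
  have hdm := Ordinal.div_add_mod γ ω
  have hq1 : 1 ≤ γ / ω := by
    by_contra hq
    rw [not_le, Ordinal.lt_one_iff_zero] at hq
    rw [hq, mul_zero, zero_add] at hdm
    exact absurd (hdm ▸ Ordinal.mod_lt γ omega0_ne_zero) (not_lt.2 h)
  have hs : 1 + (γ / ω - 1) = γ / ω := Ordinal.add_sub_cancel_of_le hq1
  refine ⟨γ / ω - 1, n, ?_, ?_⟩
  · rw [hs, ← hn, hdm]
  · have h3ω : (3 : Ordinal) ^ (ω : Ordinal) = ω :=
      opow_omega0 (by norm_num) (by exact_mod_cast natCast_lt_omega0 3)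
    have h3γ : (3 : Ordinal) ^ γ =
        ω * ((ω : Ordinal) ^ (γ / ω - 1) * ((3 ^ n : ℕ) : Ordinal)) := by
      calc (3 : Ordinal) ^ γ = (3 : Ordinal) ^ (ω * (γ / ω) + (n : Ordinal)) := by
            rw [← hn, hdm]
        _ = (3 : Ordinal) ^ (ω * (γ / ω)) * (3 : Ordinal) ^ (n : Ordinal) := opow_add _ _ _
        _ = ((3 : Ordinal) ^ (ω : Ordinal)) ^ (γ / ω) * ((3 ^ n : ℕ) : Ordinal) := by
            rw [opow_mul]
            congr 1
            rw [show ((3 : Ordinal)) = ((3 : ℕ) : Ordinal) by norm_num, ← natCast_opow]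
        _ = (ω : Ordinal) ^ (1 + (γ / ω - 1)) * ((3 ^ n : ℕ) : Ordinal) := by rw [h3ω, hs]
        _ = ω * ((ω : Ordinal) ^ (γ / ω - 1) * ((3 ^ n : ℕ) : Ordinal)) := by
            rw [opow_add, opow_one, mul_assoc]
    show (3 : Ordinal) ^ ((3 : Ordinal) ^ γ) = _
    rw [h3γ, opow_mul, h3ω]

/-- For ordinals `γ < β`, `3_2(γ) ⨳ 3_2(γ) < 3_2(β)`, where `⨳` is natural product. -/
theorem threeTwo_nmul_lt {γ β : Ordinal} (h : γ < β) :
    threeTwo γ ⨳ threeTwo γ < threeTwo β := by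
  rcases lt_or_ge γ ω with hγ | hγ
  · obtain ⟨g, rfl⟩ := Ordinal.lt_omega0.1 hγ
    have h3g : threeTwo (g : Ordinal) = ((3 ^ 3 ^ g : ℕ) : Ordinal) := by
      show (3 : Ordinal) ^ ((3 : Ordinal) ^ (g : Ordinal)) = _
      rw [show ((3 : Ordinal)) = ((3 : ℕ) : Ordinal) by norm_num, ← natCast_opow,
        ← natCast_opow]
    have hnatlt : ∀ {a b : ℕ}, a < b → 3 ^ 3 ^ a * 3 ^ 3 ^ a < 3 ^ 3 ^ b := by
      intro a b hab
      have hpos : 0 < 3 ^ a := Nat.pow_pos (by norm_num)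
      have hexp : 3 ^ a + 3 ^ a < 3 ^ b := by
        have h2 : 3 ^ (a + 1) ≤ 3 ^ b := Nat.pow_le_pow_right (by norm_num) hab
        rw [pow_succ] at h2
        omega
      calc 3 ^ 3 ^ a * 3 ^ 3 ^ a = 3 ^ (3 ^ a + 3 ^ a) := (pow_add 3 _ _).symm
        _ < 3 ^ 3 ^ b := Nat.pow_lt_pow_right (by norm_num) hexp
    rcases lt_or_ge β ω with hβ | hβ
    · obtain ⟨bb, rfl⟩ := Ordinal.lt_omega0.1 hβ
      have hgb : g < bb := by exact_mod_cast h
      rw [h3g, natCast_nmul]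
      have h3b : threeTwo (bb : Ordinal) = ((3 ^ 3 ^ bb : ℕ) : Ordinal) := by
        show (3 : Ordinal) ^ ((3 : Ordinal) ^ (bb : Ordinal)) = _
        rw [show ((3 : Ordinal)) = ((3 : ℕ) : Ordinal) by norm_num, ← natCast_opow,
          ← natCast_opow]
      rw [h3b]
      exact_mod_cast hnatlt hgb
    · rw [h3g, natCast_nmul]
      have h3ω : (3 : Ordinal) ^ (ω : Ordinal) = ω :=
        opow_omega0 (by norm_num) (by exact_mod_cast natCast_lt_omega0 3)
      have a1 : (ω : Ordinal) ≤ (3 : Ordinal) ^ β := by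
        rw [← h3ω]; exact opow_le_opow_right (by norm_num) hβ
      have a2 : (ω : Ordinal) ≤ threeTwo β := by
        rw [← h3ω]; exact opow_le_opow_right (by norm_num) (h3ω ▸ a1)
      exact (natCast_lt_omega0 _).trans_le a2
  · have hβω : ω ≤ β := hγ.trans h.le
    obtain ⟨s, n, hγeq, hγval⟩ := threeTwo_eq_omega0_opow hγ
    obtain ⟨t, m, hβeq, hβval⟩ := threeTwo_eq_omega0_opow hβω
    rw [hγval, hβval]
    set u := (ω : Ordinal) ^ s * ((3 ^ n : ℕ) : Ordinal) with hu
    have hle : (ω : Ordinal) ^ u ⨳ (ω : Ordinal) ^ u ≤ (ω : Ordinal) ^ (u ♯ u) :=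
      opow_nmul_opow_le u u
    have h0 : (0 : Ordinal) < (ω : Ordinal) ^ s := opow_pos _ omega0_pos
    have huu : u ♯ u ≤ (ω : Ordinal) ^ s * ((3 ^ n + 3 ^ n : ℕ) : Ordinal) := by
      have hk := (omega0_opow_key s).2 (3 ^ n) (3 ^ n) 0 0 h0 h0
      rw [hu]
      simpa using hk
    have hcmp : u ♯ u < (ω : Ordinal) ^ t * ((3 ^ m : ℕ) : Ordinal) := by
      have hmpos : (0 : Ordinal) < ((3 ^ m : ℕ) : Ordinal) := by
        exact_mod_cast Nat.pow_pos (by norm_num)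
      rcases lt_trichotomy s t with hlt | heq | hgt
      · refine huu.trans_lt ?_
        calc (ω : Ordinal) ^ s * ((3 ^ n + 3 ^ n : ℕ) : Ordinal)
            < (ω : Ordinal) ^ s * ω := mul_lt_mul_of_pos_left (natCast_lt_omega0 _) h0
          _ = (ω : Ordinal) ^ (Order.succ s) := (opow_succ ω s).symm
          _ ≤ (ω : Ordinal) ^ t := opow_le_opow_right omega0_pos (Order.succ_le_of_lt hlt)
          _ ≤ (ω : Ordinal) ^ t * ((3 ^ m : ℕ) : Ordinal) := le_mul_left _ hmpos
      · subst heq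
        have hnm : (n : Ordinal) < (m : Ordinal) := by
          rw [hγeq, hβeq] at h
          exact (add_lt_add_iff_left _).1 h
        have hnm' : n < m := by exact_mod_cast hnm
        refine huu.trans_lt (mul_lt_mul_of_pos_left ?_ h0)
        have hpos : 0 < 3 ^ n := Nat.pow_pos (by norm_num)
        have h2 : 3 ^ (n + 1) ≤ 3 ^ m := Nat.pow_le_pow_right (by norm_num) hnm'
        rw [pow_succ] at h2
        exact_mod_cast (by omega : 3 ^ n + 3 ^ n < 3 ^ m)
      · exfalso
        have hb2 : β < ω * (1 + t) + ω := by
          rw [hβeq]; exact add_lt_add_right (natCast_lt_omega0 m) _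
        have he : ω * (1 + t) + ω = ω * ((1 + t) + 1) := by rw [mul_add ω (1 + t) 1, mul_one]
        have ht1 : t + 1 ≤ s := by
          rw [Ordinal.add_one_eq_succ]; exact Order.succ_le_of_lt hgt
        have h1s : (1 + t) + 1 ≤ 1 + s := by
          rw [add_assoc]; exact add_le_add_right ht1 1
        have hb3 : β < ω * (1 + s) :=
          (hb2.trans_eq he).trans_le (mul_le_mul_right h1s ω)
        have hb4 : β < γ := hb3.trans_le (by rw [hγeq]; exact le_add_right le_rfl)
        exact lt_asymm h hb4
    exact hle.trans_lt ((opow_lt_opow_iff_right one_lt_omega0).2 hcmp)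
end

section
/- Define ω₁ := ω and ω_{m+1} := ω^{ω_m}. Then for every m ≥ 1, 3_{2m}(ω²) ≤ ω_{2m+1}, where 3_0(β) = β and 3_{k+1}(β) = 3^{3_k(β)}. -/
open Ordinal

/-- The tower of `ω`'s: `ω_0 = 1` (so that `ω_1 = ω`, `ω_{m+1} = ω^{ω_m}`). -/
noncomputable def omegaTower : ℕ → Ordinal
  | 0 => 1
  | m + 1 => omega0 ^ omegaTower m

/-- The tower of `3`'s over `β`: `3_0(β) = β`, `3_{k+1}(β) = 3^{3_k(β)}`. -/
noncomputable def threeTower : ℕ → Ordinal → Ordinal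
  | 0, β => β
  | k + 1, β => (3 : Ordinal) ^ threeTower k β

lemma three_opow_omega0 : (3 : Ordinal) ^ omega0 = omega0 := by
  apply Ordinal.opow_omega0
  · norm_num
  · exact nat_lt_omega0 3

lemma aux (k : ℕ) : threeTower (k + 1) (omega0 ^ (2 : Ordinal)) ≤ omegaTower (k + 2) := by
  induction k with
  | zero =>
      show (3 : Ordinal) ^ (omega0 ^ (2 : Ordinal)) ≤ omega0 ^ omega0 ^ (1 : Ordinal)
      have : (3 : Ordinal) ^ (omega0 ^ (2 : Ordinal)) = omega0 ^ omega0 := by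
        have : omega0 ^ (2 : Ordinal) = omega0 * omega0 := by
          rw [show (2 : Ordinal) = 1 + 1 by norm_num, opow_add, opow_one]
        rw [this, opow_mul, three_opow_omega0]
      rw [this, opow_one]
  | succ n ih =>
      show (3 : Ordinal) ^ (threeTower (n + 1) (omega0 ^ (2 : Ordinal))) ≤
        omega0 ^ omegaTower (n + 2)
      calc (3 : Ordinal) ^ (threeTower (n + 1) (omega0 ^ (2 : Ordinal)))
          ≤ omega0 ^ (threeTower (n + 1) (omega0 ^ (2 : Ordinal))) := by
            exact opow_le_opow_left _ (le_of_lt (nat_lt_omega0 3))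
        _ ≤ omega0 ^ omegaTower (n + 2) :=
            opow_le_opow_right omega0_pos ih

/-- For every `m ≥ 1`, `3_{2m}(ω²) ≤ ω_{2m+1}`. -/
theorem threeTower_le_omegaTower {m : ℕ} (hm : 1 ≤ m) :
    threeTower (2 * m) (omega0 ^ (2 : Ordinal)) ≤ omegaTower (2 * m + 1) := by
  obtain ⟨k, rfl⟩ : ∃ k, m = k + 1 := ⟨m - 1, by omega⟩
  have h := aux (2 * (k + 1) - 1)
  have : 2 * (k + 1) - 1 + 1 = 2 * (k + 1) := by omega
  rw [this] at h
  have h2 : 2 * (k + 1) - 1 + 2 = 2 * (k + 1) + 1 := by omega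
  rwa [h2] at h
end

section
/- Inversion for conjunction in the infinitary calculus: if ⊢^α_1 Γ ⇒ B₀ ∧ B₁ then ⊢^α_1 Γ ⇒ B_i for each i ∈ {0,1}, where ⊢^α_1 denotes derivability with depth ≤ α and all cut formulas of rank 0. -/
open Ordinal

/-- Sentences of the language `L_HA(I)`: closed equations `t = s` (closed terms
identified with their numeral values), atoms `I(t)`, propositional connectives, and
quantifiers represented by their ω-many numeral instances. -/
inductive Sent : Type
  | eq (n m : ℕ)           -- the closed equation `n̄ = m̄`
  | I (t : ℕ)              -- the atom `I(t̄)`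
  | or (A B : Sent)
  | and (A B : Sent)
  | imp (A B : Sent)
  | ex (B : ℕ → Sent)      -- `∃x B(x)`, given by its instances `B(n̄)`
  | all (B : ℕ → Sent)     -- `∀x B(x)`, given by its instances `B(n̄)`

/-- The predicate symbol `I` occurs in the sentence. -/
def containsI : Sent → Prop
  | .eq _ _ => False
  | .I _ => True
  | .or A B => containsI A ∨ containsI B
  | .and A B => containsI A ∨ containsI B
  | .imp A B => containsI A ∨ containsI B
  | .ex B => ∃ n, containsI (B n)
  | .all B => ∃ n, containsI (B n)

/-- Rank `0` sentences: sentences of `L_HA`, i.e. not containing `I`. -/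
def rankZero (A : Sent) : Prop := ¬ containsI A

/-- `Deriv Φop cutOK α Γ C` : in the infinitary sequent calculus (ω-rules for `L∃`
and `R∀`, rules `LI`/`RI` unfolding `I(t)` to `Φop t = Φ(I,t)`), the sequent
`Γ ⇒ C` has a derivation of depth `≤ α` in which every cut formula satisfies
`cutOK`.  Initial sequents: `Γ, I(t) ⇒ I(t)`; `Γ, ⊥ ⇒ A`; `Γ ⇒ ⊤`. -/
inductive Deriv (Φop : ℕ → Sent) (cutOK : Sent → Prop) :
    Ordinal → Set Sent → Sent → Prop
  | axI {α Γ t} : Sent.I t ∈ Γ → Deriv Φop cutOK α Γ (.I t)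
  | axBot {α Γ C n m} : n ≠ m → Sent.eq n m ∈ Γ → Deriv Φop cutOK α Γ C
  | axTop {α Γ n} : Deriv Φop cutOK α Γ (.eq n n)
  | orL {α γ₀ γ₁ Γ A₀ A₁ C} : γ₀ < α → γ₁ < α →
      Deriv Φop cutOK γ₀ (insert A₀ Γ) C → Deriv Φop cutOK γ₁ (insert A₁ Γ) C →
      Deriv Φop cutOK α (insert (.or A₀ A₁) Γ) C
  | orR₀ {α γ Γ A₀ A₁} : γ < α → Deriv Φop cutOK γ Γ A₀ →
      Deriv Φop cutOK α Γ (.or A₀ A₁)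
  | orR₁ {α γ Γ A₀ A₁} : γ < α → Deriv Φop cutOK γ Γ A₁ →
      Deriv Φop cutOK α Γ (.or A₀ A₁)
  | andL₀ {α γ Γ A₀ A₁ C} : γ < α →
      Deriv Φop cutOK γ (insert A₀ (insert (.and A₀ A₁) Γ)) C →
      Deriv Φop cutOK α (insert (.and A₀ A₁) Γ) C
  | andL₁ {α γ Γ A₀ A₁ C} : γ < α →
      Deriv Φop cutOK γ (insert A₁ (insert (.and A₀ A₁) Γ)) C →
      Deriv Φop cutOK α (insert (.and A₀ A₁) Γ) C
  | andR {α γ₀ γ₁ Γ A₀ A₁} : γ₀ < α → γ₁ < α →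
      Deriv Φop cutOK γ₀ Γ A₀ → Deriv Φop cutOK γ₁ Γ A₁ →
      Deriv Φop cutOK α Γ (.and A₀ A₁)
  | impL {α γ₀ γ₁ Γ A B C} : γ₀ < α → γ₁ < α →
      Deriv Φop cutOK γ₀ (insert (.imp A B) Γ) A →
      Deriv Φop cutOK γ₁ (insert B Γ) C →
      Deriv Φop cutOK α (insert (.imp A B) Γ) C
  | impR {α γ Γ A B} : γ < α → Deriv Φop cutOK γ (insert A Γ) B →
      Deriv Φop cutOK α Γ (.imp A B)
  | exL {α Γ B C} (γ : ℕ → Ordinal) : (∀ n, γ n < α) →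
      (∀ n, Deriv Φop cutOK (γ n) (insert (B n) Γ) C) →
      Deriv Φop cutOK α (insert (.ex B) Γ) C
  | exR {α γ Γ B} (n : ℕ) : γ < α → Deriv Φop cutOK γ Γ (B n) →
      Deriv Φop cutOK α Γ (.ex B)
  | allL {α γ Γ B C} (n : ℕ) : γ < α →
      Deriv Φop cutOK γ (insert (B n) (insert (.all B) Γ)) C →
      Deriv Φop cutOK α (insert (.all B) Γ) C
  | allR {α Γ B} (γ : ℕ → Ordinal) : (∀ n, γ n < α) →
      (∀ n, Deriv Φop cutOK (γ n) Γ (B n)) →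
      Deriv Φop cutOK α Γ (.all B)
  | LI {α γ Γ t C} : γ < α → Deriv Φop cutOK γ (insert (Φop t) Γ) C →
      Deriv Φop cutOK α (insert (.I t) Γ) C
  | RI {α γ Γ t} : γ < α → Deriv Φop cutOK γ Γ (Φop t) →
      Deriv Φop cutOK α Γ (.I t)
  | cut {α γ₀ γ₁ Γ Δ A C} : cutOK A → γ₀ < α → γ₁ < α →
      Deriv Φop cutOK γ₀ Γ A → Deriv Φop cutOK γ₁ (insert A Δ) C →
      Deriv Φop cutOK α (Γ ∪ Δ) C

/-- `⊢^α_1 Γ ⇒ C` : derivability with depth `≤ α` and all cut formulas of rank `0`. -/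
def Deriv1 (Φop : ℕ → Sent) (α : Ordinal) (Γ : Set Sent) (C : Sent) : Prop :=
  Deriv Φop rankZero α Γ C


lemma Deriv.mono {Φop : ℕ → Sent} {cutOK : Sent → Prop} {α β : Ordinal}
    {Γ : Set Sent} {C : Sent} (h : Deriv Φop cutOK α Γ C) (hle : α ≤ β) :
    Deriv Φop cutOK β Γ C := by
  induction h with
  | axI h => exact .axI h
  | axBot h1 h2 => exact .axBot h1 h2
  | axTop => exact .axTop
  | orL h0 h1 d0 d1 => exact .orL (lt_of_lt_of_le h0 hle) (lt_of_lt_of_le h1 hle) d0 d1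
  | orR₀ h d => exact .orR₀ (lt_of_lt_of_le h hle) d
  | orR₁ h d => exact .orR₁ (lt_of_lt_of_le h hle) d
  | andL₀ h d => exact .andL₀ (lt_of_lt_of_le h hle) d
  | andL₁ h d => exact .andL₁ (lt_of_lt_of_le h hle) d
  | andR h0 h1 d0 d1 => exact .andR (lt_of_lt_of_le h0 hle) (lt_of_lt_of_le h1 hle) d0 d1
  | impL h0 h1 d0 d1 => exact .impL (lt_of_lt_of_le h0 hle) (lt_of_lt_of_le h1 hle) d0 d1
  | impR h d => exact .impR (lt_of_lt_of_le h hle) d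
  | exL γ h d => exact .exL γ (fun n => lt_of_lt_of_le (h n) hle) d
  | exR n h d => exact .exR n (lt_of_lt_of_le h hle) d
  | allL n h d => exact .allL n (lt_of_lt_of_le h hle) d
  | allR γ h d => exact .allR γ (fun n => lt_of_lt_of_le (h n) hle) d
  | LI h d => exact .LI (lt_of_lt_of_le h hle) d
  | RI h d => exact .RI (lt_of_lt_of_le h hle) d
  | cut hA h0 h1 d0 d1 => exact .cut hA (lt_of_lt_of_le h0 hle) (lt_of_lt_of_le h1 hle) d0 d1

lemma inv_and_aux {Φop : ℕ → Sent} {cutOK : Sent → Prop} {α : Ordinal}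
    {Γ : Set Sent} {C : Sent} (h : Deriv Φop cutOK α Γ C) :
    ∀ B₀ B₁, C = .and B₀ B₁ →
      Deriv Φop cutOK α Γ B₀ ∧ Deriv Φop cutOK α Γ B₁ := by
  induction h with
  | axI _ => intro B₀ B₁ hC; cases hC
  | axBot h1 h2 => intro B₀ B₁ hC; exact ⟨.axBot h1 h2, .axBot h1 h2⟩
  | axTop => intro B₀ B₁ hC; cases hC
  | orL h0 h1 _ _ ih0 ih1 =>
      intro B₀ B₁ hC
      obtain ⟨a0, a1⟩ := ih0 B₀ B₁ hC
      obtain ⟨b0, b1⟩ := ih1 B₀ B₁ hC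
      exact ⟨.orL h0 h1 a0 b0, .orL h0 h1 a1 b1⟩
  | orR₀ _ _ => intro B₀ B₁ hC; cases hC
  | orR₁ _ _ => intro B₀ B₁ hC; cases hC
  | andL₀ h _ ih =>
      intro B₀ B₁ hC
      obtain ⟨a0, a1⟩ := ih B₀ B₁ hC
      exact ⟨.andL₀ h a0, .andL₀ h a1⟩
  | andL₁ h _ ih =>
      intro B₀ B₁ hC
      obtain ⟨a0, a1⟩ := ih B₀ B₁ hC
      exact ⟨.andL₁ h a0, .andL₁ h a1⟩
  | andR h0 h1 d0 d1 =>
      intro B₀ B₁ hC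
      cases hC
      exact ⟨d0.mono h0.le, d1.mono h1.le⟩
  | impL h0 h1 d0 _ _ ih1 =>
      intro B₀ B₁ hC
      obtain ⟨a0, a1⟩ := ih1 B₀ B₁ hC
      exact ⟨.impL h0 h1 d0 a0, .impL h0 h1 d0 a1⟩
  | impR _ _ => intro B₀ B₁ hC; cases hC
  | exL γ h _ ih =>
      intro B₀ B₁ hC
      exact ⟨.exL γ h fun n => (ih n B₀ B₁ hC).1, .exL γ h fun n => (ih n B₀ B₁ hC).2⟩
  | exR n _ _ => intro B₀ B₁ hC; cases hC
  | allL n h _ ih =>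
      intro B₀ B₁ hC
      obtain ⟨a0, a1⟩ := ih B₀ B₁ hC
      exact ⟨.allL n h a0, .allL n h a1⟩
  | allR _ _ _ => intro B₀ B₁ hC; cases hC
  | LI h _ ih =>
      intro B₀ B₁ hC
      obtain ⟨a0, a1⟩ := ih B₀ B₁ hC
      exact ⟨.LI h a0, .LI h a1⟩
  | RI _ _ => intro B₀ B₁ hC; cases hC
  | cut hA h0 h1 d0 _ _ ih1 =>
      intro B₀ B₁ hC
      obtain ⟨a0, a1⟩ := ih1 B₀ B₁ hC
      exact ⟨.cut hA h0 h1 d0 a0, .cut hA h0 h1 d0 a1⟩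

/-- Inversion for conjunction: if `⊢^α_1 Γ ⇒ B₀ ∧ B₁` then `⊢^α_1 Γ ⇒ B₀` and
`⊢^α_1 Γ ⇒ B₁`. -/
theorem inversion_and (Φop : ℕ → Sent) {α : Ordinal} {Γ : Set Sent} {B₀ B₁ : Sent}
    (h : Deriv1 Φop α Γ (.and B₀ B₁)) :
    Deriv1 Φop α Γ B₀ ∧ Deriv1 Φop α Γ B₁ := inv_and_aux h B₀ B₁ rfl
end

section
/- Inversion for implication: if ⊢^α_1 Γ ⇒ B₀ → B₁ in the infinitary intuitionistic calculus, then ⊢^α_1 Γ, B₀ ⇒ B₁. -/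
open Ordinal

/-- Monotonicity in the ordinal bound. -/
theorem Deriv.mono_ord {Φop P} {α β : Ordinal} {Γ : Set Sent} {C : Sent}
    (h : Deriv Φop P α Γ C) (hle : α ≤ β) : Deriv Φop P β Γ C := by
  cases h with
  | axI h => exact .axI h
  | axBot hn hm => exact .axBot hn hm
  | axTop => exact .axTop
  | orL h0 h1 d0 d1 => exact .orL (h0.trans_le hle) (h1.trans_le hle) d0 d1
  | orR₀ h0 d0 => exact .orR₀ (h0.trans_le hle) d0
  | orR₁ h0 d0 => exact .orR₁ (h0.trans_le hle) d0
  | andL₀ h0 d0 => exact .andL₀ (h0.trans_le hle) d0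
  | andL₁ h0 d0 => exact .andL₁ (h0.trans_le hle) d0
  | andR h0 h1 d0 d1 => exact .andR (h0.trans_le hle) (h1.trans_le hle) d0 d1
  | impL h0 h1 d0 d1 => exact .impL (h0.trans_le hle) (h1.trans_le hle) d0 d1
  | impR h0 d0 => exact .impR (h0.trans_le hle) d0
  | exL γ hγ d => exact .exL γ (fun n => (hγ n).trans_le hle) d
  | exR n h0 d0 => exact .exR n (h0.trans_le hle) d0
  | allL n h0 d0 => exact .allL n (h0.trans_le hle) d0
  | allR γ hγ d => exact .allR γ (fun n => (hγ n).trans_le hle) d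
  | LI h0 d0 => exact .LI (h0.trans_le hle) d0
  | RI h0 d0 => exact .RI (h0.trans_le hle) d0
  | cut hA h0 h1 d0 d1 => exact .cut hA (h0.trans_le hle) (h1.trans_le hle) d0 d1

/-- Weakening: enlarging the antecedent preserves derivability. -/
theorem Deriv.weaken {Φop P} {α : Ordinal} {Γ Δ : Set Sent} {C : Sent}
    (h : Deriv Φop P α Γ C) (hs : Γ ⊆ Δ) : Deriv Φop P α Δ C := by
  induction h generalizing Δ with
  | axI hm => exact .axI (hs hm)
  | axBot hn hm => exact .axBot hn (hs hm)
  | axTop => exact .axTop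
  | orL h0 h1 d0 d1 ih0 ih1 =>
      have hm := hs (Set.mem_insert _ _)
      have hΓ := (Set.subset_insert _ _).trans hs
      have := Deriv.orL h0 h1 (ih0 (Set.insert_subset_insert hΓ))
        (ih1 (Set.insert_subset_insert hΓ))
      rwa [Set.insert_eq_self.mpr hm] at this
  | orR₀ h0 d0 ih => exact .orR₀ h0 (ih hs)
  | orR₁ h0 d0 ih => exact .orR₁ h0 (ih hs)
  | andL₀ h0 d0 ih =>
      have hm := hs (Set.mem_insert _ _)
      have hΓ := (Set.subset_insert _ _).trans hs
      have := Deriv.andL₀ h0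
        (ih (Set.insert_subset_insert (Set.insert_subset_insert hΓ)))
      rwa [Set.insert_eq_self.mpr hm] at this
  | andL₁ h0 d0 ih =>
      have hm := hs (Set.mem_insert _ _)
      have hΓ := (Set.subset_insert _ _).trans hs
      have := Deriv.andL₁ h0
        (ih (Set.insert_subset_insert (Set.insert_subset_insert hΓ)))
      rwa [Set.insert_eq_self.mpr hm] at this
  | andR h0 h1 d0 d1 ih0 ih1 => exact .andR h0 h1 (ih0 hs) (ih1 hs)
  | impL h0 h1 d0 d1 ih0 ih1 =>
      have hm := hs (Set.mem_insert _ _)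
      have hΓ := (Set.subset_insert _ _).trans hs
      have := Deriv.impL h0 h1 (ih0 (Set.insert_subset_insert hΓ))
        (ih1 (Set.insert_subset_insert hΓ))
      rwa [Set.insert_eq_self.mpr hm] at this
  | impR h0 d0 ih => exact .impR h0 (ih (Set.insert_subset_insert hs))
  | exL γ hγ d ih =>
      have hm := hs (Set.mem_insert _ _)
      have hΓ := (Set.subset_insert _ _).trans hs
      have := Deriv.exL γ hγ (fun n => ih n (Set.insert_subset_insert hΓ))
      rwa [Set.insert_eq_self.mpr hm] at this
  | exR n h0 d0 ih => exact .exR n h0 (ih hs)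
  | allL n h0 d0 ih =>
      have hm := hs (Set.mem_insert _ _)
      have hΓ := (Set.subset_insert _ _).trans hs
      have := Deriv.allL n h0
        (ih (Set.insert_subset_insert (Set.insert_subset_insert hΓ)))
      rwa [Set.insert_eq_self.mpr hm] at this
  | allR γ hγ d ih => exact .allR γ hγ (fun n => ih n hs)
  | LI h0 d0 ih =>
      have hm := hs (Set.mem_insert _ _)
      have hΓ := (Set.subset_insert _ _).trans hs
      have := Deriv.LI h0 (ih (Set.insert_subset_insert hΓ))
      rwa [Set.insert_eq_self.mpr hm] at this
  | RI h0 d0 ih => exact .RI h0 (ih hs)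
  | cut hA h0 h1 d0 d1 ih0 ih1 =>
      have := Deriv.cut hA h0 h1 (ih0 (Set.union_subset_iff.mp hs).1)
        (ih1 (Set.insert_subset_insert (Set.union_subset_iff.mp hs).2))
      rwa [Set.union_self] at this

theorem inversion_imp_aux {Φop P} {α : Ordinal} {Γ : Set Sent} {C : Sent}
    (h : Deriv Φop P α Γ C) :
    ∀ B₀ B₁, C = .imp B₀ B₁ → Deriv Φop P α (insert B₀ Γ) B₁ := by
  induction h with
  | axI hm => intro B₀ B₁ hC; exact absurd hC (by simp)
  | axBot hn hm => intro B₀ B₁ hC; exact .axBot hn (Set.mem_insert_of_mem _ hm)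
  | axTop => intro B₀ B₁ hC; exact absurd hC (by simp)
  | orL h0 h1 d0 d1 ih0 ih1 =>
      intro B₀ B₁ hC
      rw [Set.insert_comm]
      refine .orL h0 h1 ?_ ?_
      · rw [Set.insert_comm]; exact ih0 B₀ B₁ hC
      · rw [Set.insert_comm]; exact ih1 B₀ B₁ hC
  | orR₀ h0 d0 ih => intro B₀ B₁ hC; exact absurd hC (by simp)
  | orR₁ h0 d0 ih => intro B₀ B₁ hC; exact absurd hC (by simp)
  | andL₀ h0 d0 ih =>
      intro B₀ B₁ hC
      rw [Set.insert_comm]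
      refine .andL₀ h0 ?_
      rw [Set.insert_comm _ B₀, Set.insert_comm _ B₀]
      exact ih B₀ B₁ hC
  | andL₁ h0 d0 ih =>
      intro B₀ B₁ hC
      rw [Set.insert_comm]
      refine .andL₁ h0 ?_
      rw [Set.insert_comm _ B₀, Set.insert_comm _ B₀]
      exact ih B₀ B₁ hC
  | andR h0 h1 d0 d1 ih0 ih1 => intro B₀ B₁ hC; exact absurd hC (by simp)
  | impL h0 h1 d0 d1 ih0 ih1 =>
      intro B₀ B₁ hC
      rw [Set.insert_comm]
      refine .impL h0 h1 ?_ ?_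
      · exact d0.weaken (Set.insert_subset_insert (Set.subset_insert _ _))
      · rw [Set.insert_comm]; exact ih1 B₀ B₁ hC
  | impR h0 d0 _ =>
      intro B₀ B₁ hC
      cases hC
      exact d0.mono_ord h0.le
  | exL γ hγ d ih =>
      intro B₀ B₁ hC
      rw [Set.insert_comm]
      refine .exL γ hγ (fun n => ?_)
      rw [Set.insert_comm]; exact ih n B₀ B₁ hC
  | exR n h0 d0 ih => intro B₀ B₁ hC; exact absurd hC (by simp)
  | allL n h0 d0 ih =>
      intro B₀ B₁ hC
      rw [Set.insert_comm]
      refine .allL n h0 ?_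
      rw [Set.insert_comm _ B₀, Set.insert_comm _ B₀]
      exact ih B₀ B₁ hC
  | allR γ hγ d ih => intro B₀ B₁ hC; exact absurd hC (by simp)
  | LI h0 d0 ih =>
      intro B₀ B₁ hC
      rw [Set.insert_comm]
      refine .LI h0 ?_
      rw [Set.insert_comm]; exact ih B₀ B₁ hC
  | RI h0 d0 ih => intro B₀ B₁ hC; exact absurd hC (by simp)
  | cut hA h0 h1 d0 d1 ih0 ih1 =>
      intro B₀ B₁ hC
      rw [← Set.union_insert]
      refine .cut hA h0 h1 d0 ?_
      rw [Set.insert_comm]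
      exact ih1 B₀ B₁ hC

/-- Inversion for implication: if `⊢^α_1 Γ ⇒ B₀ → B₁` then `⊢^α_1 Γ, B₀ ⇒ B₁`. -/
theorem inversion_imp (Φop : ℕ → Sent) {α : Ordinal} {Γ : Set Sent} {B₀ B₁ : Sent}
    (h : Deriv1 Φop α Γ (.imp B₀ B₁)) : Deriv1 Φop α (insert B₀ Γ) B₁ :=
  inversion_imp_aux h B₀ B₁ rfl
end

section
/- Inversion for ⊥: if ⊢^α_1 Γ ⇒ A and A is a false closed equation ⊥, then ⊢^α_1 Γ ⇒ C for every sentence C. -/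
open Ordinal

theorem inversion_bot_aux (Φop : ℕ → Sent) (cutOK : Sent → Prop) :
    ∀ {α : Ordinal} {Γ : Set Sent} {A : Sent}, Deriv Φop cutOK α Γ A →
      ∀ n m : ℕ, A = .eq n m → n ≠ m → ∀ C : Sent, Deriv Φop cutOK α Γ C := by
  intro α Γ A h
  induction h with
  | axI _ => intro n m hA; exact absurd hA (by simp)
  | axBot hnm hmem => intro _ _ _ _ C; exact Deriv.axBot hnm hmem
  | axTop =>
    intro n m hA hnm C
    cases hA; exact absurd rfl hnm
  | orL h0 h1 _ _ ih0 ih1 =>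
    intro n m hA hnm C
    exact Deriv.orL h0 h1 (ih0 n m hA hnm C) (ih1 n m hA hnm C)
  | orR₀ _ _ => intro n m hA; exact absurd hA (by simp)
  | orR₁ _ _ => intro n m hA; exact absurd hA (by simp)
  | andL₀ h0 _ ih =>
    intro n m hA hnm C
    exact Deriv.andL₀ h0 (ih n m hA hnm C)
  | andL₁ h0 _ ih =>
    intro n m hA hnm C
    exact Deriv.andL₁ h0 (ih n m hA hnm C)
  | andR _ _ _ _ => intro n m hA; exact absurd hA (by simp)
  | impL h0 h1 hd _ _ ih1 =>
    intro n m hA hnm C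
    exact Deriv.impL h0 h1 hd (ih1 n m hA hnm C)
  | exL γ hγ _ ih =>
    intro n m hA hnm C
    exact Deriv.exL γ hγ (fun k => ih k n m hA hnm C)
  | exR _ _ _ => intro n m hA; exact absurd hA (by simp)
  | allL k h0 _ ih =>
    intro n m hA hnm C
    exact Deriv.allL k h0 (ih n m hA hnm C)
  | impR _ _ _ => intro n m hA; exact absurd hA (by simp)
  | allR _ _ _ => intro n m hA; exact absurd hA (by simp)
  | LI h0 _ ih =>
    intro n m hA hnm C
    exact Deriv.LI h0 (ih n m hA hnm C)
  | RI _ _ => intro n m hA; exact absurd hA (by simp)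
  | cut hok h0 h1 hd _ _ ih1 =>
    intro n m hA hnm C
    exact Deriv.cut hok h0 h1 hd (ih1 n m hA hnm C)

/-- Inversion for `⊥`: if `⊢^α_1 Γ ⇒ A` where `A` is a false closed equation, then
`⊢^α_1 Γ ⇒ C` for every sentence `C`. -/
theorem inversion_bot (Φop : ℕ → Sent) {α : Ordinal} {Γ : Set Sent} {n m : ℕ}
    (hnm : n ≠ m) (h : Deriv1 Φop α Γ (.eq n m)) :
    ∀ C : Sent, Deriv1 Φop α Γ C :=
  fun C => inversion_bot_aux Φop rankZero h n m rfl hnm C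
end
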